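/- Let d ≥ 2, let σ denote the (d-1)-dimensional Hausdorff measure on the unit sphere S^{d-1} ⊆ ℝ^d, and let e₁ = (1,0,…,0) ∈ S^{d-1}. Then there exists a constant C > 0 such that for every integer k ≥ 0, ∫_{S^{d-1}} (1 + 2^k |e₁ - y|)^{-d} dσ(y) ≤ C 2^{-k(d-1)}. -/

import Mathlib

open MeasureTheory Complex Real

/-- The surface area measure of the unit sphere `S^{d-1} ⊆ ℝ^d`, realized as the
`(d-1)`-dimensional Hausdorff measure restricted to the sphere. -/
noncomputable def sphereMeasure (d : ℕ) : Measure (EuclideanSpace ℝ (Fin d)) :=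
  (MeasureTheory.Measure.hausdorffMeasure (d - 1 : ℕ)).restrict
    (Metric.sphere (0 : EuclideanSpace ℝ (Fin d)) 1)

/-- `g_α(ξ) = ∫_{S^{d-1}} x^α e^{-i x·ξ} dσ(x)`, the Fourier transform of the moment measure
`x^α dσ`. -/
noncomputable def momentFT (d : ℕ) (α : Fin d → ℕ) (ξ : EuclideanSpace ℝ (Fin d)) : ℂ :=
  ∫ x, (∏ j, (x j : ℂ) ^ α j) * Complex.exp (-(Complex.I * ((inner ℝ x ξ : ℝ) : ℂ)))
    ∂(sphereMeasure d)

open Metric Set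

section Aux

lemma sqrt_lip {a b : ℝ} (ha : 3/4 ≤ a) (hb : 3/4 ≤ b) :
    |Real.sqrt a - Real.sqrt b| ≤ |a - b| := by
  have ha0 : (0:ℝ) ≤ a := by linarith
  have hb0 : (0:ℝ) ≤ b := by linarith
  have key : (Real.sqrt a - Real.sqrt b) * (Real.sqrt a + Real.sqrt b) = a - b := by
    have := Real.sq_sqrt ha0
    have := Real.sq_sqrt hb0
    nlinarith
  have h1 : (1:ℝ) ≤ Real.sqrt a + Real.sqrt b := by
    have h2 : Real.sqrt (3/4) ≤ Real.sqrt a := Real.sqrt_le_sqrt ha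
    have h3 : Real.sqrt (3/4) ≤ Real.sqrt b := Real.sqrt_le_sqrt hb
    have h34 : (1/2 : ℝ) ≤ Real.sqrt (3/4) := by
      nlinarith [Real.sq_sqrt (show (0:ℝ) ≤ 3/4 by norm_num), Real.sqrt_nonneg (3/4 : ℝ)]
    linarith
  calc |Real.sqrt a - Real.sqrt b| = |Real.sqrt a - Real.sqrt b| * 1 := by ring
    _ ≤ |Real.sqrt a - Real.sqrt b| * (Real.sqrt a + Real.sqrt b) :=
        mul_le_mul_of_nonneg_left h1 (abs_nonneg _)
    _ = |(Real.sqrt a - Real.sqrt b) * (Real.sqrt a + Real.sqrt b)| := by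
        rw [abs_mul, _root_.abs_of_nonneg (by linarith [Real.sqrt_nonneg a, Real.sqrt_nonneg b] :
          (0:ℝ) ≤ Real.sqrt a + Real.sqrt b)]
    _ = |a - b| := by rw [key]

noncomputable def chart (m : ℕ) (z : EuclideanSpace ℝ (Fin m)) : EuclideanSpace ℝ (Fin (m+1)) :=
  (WithLp.equiv 2 (Fin (m+1) → ℝ)).symm
    (Fin.cons (Real.sqrt (1 - ‖z‖^2)) (WithLp.equiv 2 (Fin m → ℝ) z))

lemma chart_zero (m : ℕ) (z : EuclideanSpace ℝ (Fin m)) :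
    chart m z 0 = Real.sqrt (1 - ‖z‖^2) := rfl

lemma chart_succ (m : ℕ) (z : EuclideanSpace ℝ (Fin m)) (i : Fin m) :
    chart m z i.succ = z i := rfl

lemma chart_lip (m : ℕ) : LipschitzOnWith 2 (chart m) (closedBall 0 (1/2)) := by
  apply LipschitzOnWith.of_dist_le_mul
  intro z hz w hw
  rw [mem_closedBall, dist_zero_right] at hz hw
  have hz2 : ‖z‖^2 ≤ 1/4 := by nlinarith [norm_nonneg z]
  have hw2 : ‖w‖^2 ≤ 1/4 := by nlinarith [norm_nonneg w]
  have key : |Real.sqrt (1 - ‖z‖^2) - Real.sqrt (1 - ‖w‖^2)| ≤ dist z w := by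
    have h1 : |Real.sqrt (1 - ‖z‖^2) - Real.sqrt (1 - ‖w‖^2)| ≤ |(1 - ‖z‖^2) - (1 - ‖w‖^2)| :=
      sqrt_lip (by linarith) (by linarith)
    have h2 : |(1 - ‖z‖^2) - (1 - ‖w‖^2)| = |‖z‖ - ‖w‖| * (‖z‖ + ‖w‖) := by
      rw [show (1 - ‖z‖^2) - (1 - ‖w‖^2) = (‖w‖ - ‖z‖) * (‖z‖ + ‖w‖) by ring, abs_mul,
        abs_sub_comm, _root_.abs_of_nonneg (by positivity : (0:ℝ) ≤ ‖z‖ + ‖w‖)]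
    have h3 : |‖z‖ - ‖w‖| ≤ dist z w := by
      rw [dist_eq_norm]; exact abs_norm_sub_norm_le z w
    have h4 : ‖z‖ + ‖w‖ ≤ 1 := by linarith
    calc |Real.sqrt (1 - ‖z‖^2) - Real.sqrt (1 - ‖w‖^2)| ≤ |‖z‖ - ‖w‖| * (‖z‖ + ‖w‖) :=
          h1.trans h2.le
      _ ≤ dist z w * 1 := mul_le_mul h3 h4 (by positivity) dist_nonneg
      _ = dist z w := mul_one _
  rw [EuclideanSpace.dist_eq]
  have hdzw : dist z w = Real.sqrt (∑ i, dist (z i) (w i) ^ 2) := EuclideanSpace.dist_eq z w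
  rw [Fin.sum_univ_succ]
  simp only [chart_zero, chart_succ]
  have hsum : (0:ℝ) ≤ ∑ i : Fin m, dist (z i) (w i) ^ 2 :=
    Finset.sum_nonneg fun i _ => sq_nonneg _
  have h3 : ∑ i : Fin m, dist (z i) (w i) ^ 2 = dist z w ^ 2 := by
    rw [hdzw, Real.sq_sqrt hsum]
  rw [h3]
  have h4 : dist (Real.sqrt (1 - ‖z‖^2)) (Real.sqrt (1 - ‖w‖^2)) ^ 2 ≤ dist z w ^ 2 := by
    rw [Real.dist_eq]
    have := abs_nonneg (Real.sqrt (1 - ‖z‖^2) - Real.sqrt (1 - ‖w‖^2))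
    nlinarith [key, dist_nonneg (x := z) (y := w)]
  calc Real.sqrt (dist (Real.sqrt (1 - ‖z‖ ^ 2)) (Real.sqrt (1 - ‖w‖ ^ 2)) ^ 2 + dist z w ^ 2)
      ≤ Real.sqrt (dist z w ^2 + dist z w ^2) := by
        apply Real.sqrt_le_sqrt; linarith
    _ ≤ 2 * dist z w := by
        have : Real.sqrt (dist z w ^2 + dist z w ^2) ≤ Real.sqrt ((2*dist z w)^2) := by
          apply Real.sqrt_le_sqrt; nlinarith [sq_nonneg (dist z w)]
        calc Real.sqrt (dist z w ^2 + dist z w ^2) ≤ Real.sqrt ((2*dist z w)^2) := this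
          _ = 2 * dist z w := Real.sqrt_sq (by positivity)
    _ = ((2:NNReal):ℝ) * dist z w := by norm_num


lemma norm_sq_eq (n : ℕ) (x : EuclideanSpace ℝ (Fin n)) : ‖x‖^2 = ∑ i, x i ^ 2 := by
  rw [EuclideanSpace.norm_eq, Real.sq_sqrt (Finset.sum_nonneg fun i _ => sq_nonneg _)]
  exact Finset.sum_congr rfl fun i _ => by rw [Real.norm_eq_abs, _root_.sq_abs]

lemma cap_subset (m : ℕ) (r : ℝ) (hr : r ≤ 1/2) :
    sphere (0 : EuclideanSpace ℝ (Fin (m+1))) 1 ∩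
      ball (EuclideanSpace.single (0 : Fin (m+1)) (1:ℝ)) r ⊆
    chart m '' (closedBall 0 r) := by
  rintro y ⟨hy1, hy2⟩
  set e : EuclideanSpace ℝ (Fin (m+1)) := EuclideanSpace.single (0 : Fin (m+1)) (1:ℝ) with he
  have hy1' : ‖y‖ = 1 := by simpa [dist_zero_right] using mem_sphere_iff_norm.mp hy1
  have hy2' : ‖e - y‖ < r := by
    rw [mem_ball, dist_eq_norm, ← norm_neg] at hy2; simpa using hy2
  set z : EuclideanSpace ℝ (Fin m) :=
    (WithLp.equiv 2 (Fin m → ℝ)).symm (fun i => y i.succ) with hz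
  have hzi : ∀ i : Fin m, z i = y i.succ := fun i => rfl
  have he0 : e 0 = 1 := by simp [he, EuclideanSpace.single_apply]
  have hes : ∀ i : Fin m, e i.succ = 0 := by
    intro i; simp [he, EuclideanSpace.single_apply, Fin.succ_ne_zero]
  have hey : ∀ i : Fin (m+1), (e - y) i = e i - y i := fun i => rfl
  have hnz : ‖z‖^2 = ∑ i : Fin m, y i.succ ^ 2 := by
    rw [norm_sq_eq]; exact Finset.sum_congr rfl fun i _ => by rw [hzi]
  have hny : (y 0)^2 + ‖z‖^2 = 1 := by
    have := norm_sq_eq (m+1) y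
    rw [hy1'] at this
    rw [Fin.sum_univ_succ] at this
    rw [hnz]; linarith [this]
  have hzr : ‖z‖ ≤ r := by
    have h1 : ‖z‖^2 ≤ ‖e - y‖^2 := by
      rw [hnz, norm_sq_eq]
      rw [Fin.sum_univ_succ]
      have : ∀ i : Fin m, y i.succ ^ 2 = (e - y) i.succ ^ 2 := by
        intro i; rw [hey, hes]; ring
      rw [Finset.sum_congr rfl fun i _ => this i]
      nlinarith [sq_nonneg ((e - y) 0)]
    have h2 : (0:ℝ) ≤ ‖e - y‖ := norm_nonneg _
    nlinarith [norm_nonneg z]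
  have hrpos : 0 < r := lt_of_le_of_lt (norm_nonneg _) hy2'
  have hy0 : 1 - r ≤ y 0 := by
    have h1 : |(e - y) 0| ≤ ‖e - y‖ := by
      have := norm_sq_eq (m+1) (e - y)
      have h2 : ((e-y) 0)^2 ≤ ‖e-y‖^2 := by
        rw [this, Fin.sum_univ_succ]
        have : (0:ℝ) ≤ ∑ i : Fin m, (e - y) i.succ ^ 2 :=
          Finset.sum_nonneg fun i _ => sq_nonneg _
        linarith
      nlinarith [abs_nonneg ((e-y) 0), norm_nonneg (e - y), _root_.sq_abs ((e-y) 0)]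
    rw [hey, he0] at h1
    have h3 := h1.trans hy2'.le
    have h4 := le_abs_self (1 - y 0)
    linarith
  refine ⟨z, ?_, ?_⟩
  · rw [mem_closedBall, dist_zero_right]; exact hzr
  · have h0 : chart m z 0 = y 0 := by
      show Real.sqrt (1 - ‖z‖^2) = y 0
      have : 1 - ‖z‖^2 = (y 0)^2 := by linarith
      rw [this, Real.sqrt_sq (by linarith : (0:ℝ) ≤ y 0)]
    have hs : ∀ i : Fin m, chart m z i.succ = y i.succ := fun i => hzi i
    ext i
    induction i using Fin.cases with
    | zero => exact h0
    | succ i => exact hs i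

lemma euclBall_bound (m : ℕ) :
    ∃ B : ENNReal, B ≠ ⊤ ∧ ∀ r : ℝ, 0 ≤ r →
      MeasureTheory.Measure.hausdorffMeasure (m : ℝ)
        (closedBall (0 : EuclideanSpace ℝ (Fin m)) r) ≤ B * ENNReal.ofReal (r ^ m) := by
  classical
  have hanti := PiLp.antilipschitzWith_ofLp 2 (fun _ : Fin m => ℝ)
  set ψ : (Fin m → ℝ) → EuclideanSpace ℝ (Fin m) := fun x => (WithLp.equiv 2 (Fin m → ℝ)).symm x with hψ
  obtain ⟨K, hlip⟩ : ∃ K : NNReal, LipschitzWith K ψ :=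
    ⟨_, LipschitzWith.of_dist_le_mul fun x y => hanti.le_mul_dist (ψ x) (ψ y)⟩
  refine ⟨(K : ENNReal) ^ (m : ℝ) * ENNReal.ofReal ((2:ℝ) ^ m), ?_, ?_⟩
  · apply ENNReal.mul_ne_top
    · rw [← ENNReal.coe_rpow_of_nonneg K (by positivity : (0:ℝ) ≤ (m:ℝ))]
      exact ENNReal.coe_ne_top
    · exact ENNReal.ofReal_ne_top
  · intro r hr
    have hsub : closedBall (0 : EuclideanSpace ℝ (Fin m)) r ⊆
        ψ '' (closedBall (0 : Fin m → ℝ) r) := by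
      intro x hx
      refine ⟨WithLp.equiv 2 (Fin m → ℝ) x, ?_, rfl⟩
      rw [mem_closedBall] at hx ⊢
      have := (PiLp.lipschitzWith_ofLp 2 (fun _ : Fin m => ℝ)).dist_le_mul x 0
      simpa using this.trans (by simpa using hx)
    calc MeasureTheory.Measure.hausdorffMeasure (m : ℝ)
          (closedBall (0 : EuclideanSpace ℝ (Fin m)) r)
        ≤ MeasureTheory.Measure.hausdorffMeasure (m : ℝ)
            (ψ '' (closedBall (0 : Fin m → ℝ) r)) := measure_mono hsub
      _ ≤ (K : ENNReal) ^ (m : ℝ) *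
            MeasureTheory.Measure.hausdorffMeasure (m : ℝ) (closedBall (0 : Fin m → ℝ) r) :=
          hlip.hausdorffMeasure_image_le (by positivity) _
      _ = (K : ENNReal) ^ (m : ℝ) * ENNReal.ofReal ((2*r) ^ m) := by
          congr 1
          have hpi : (MeasureTheory.Measure.hausdorffMeasure ((Fintype.card (Fin m) : ℕ) : ℝ) :
              Measure (Fin m → ℝ)) = volume := hausdorffMeasure_pi_real
          rw [Fintype.card_fin] at hpi
          rw [hpi, Real.volume_pi_closedBall _ hr, Fintype.card_fin]
      _ = (K : ENNReal) ^ (m : ℝ) * ENNReal.ofReal ((2:ℝ)^m) * ENNReal.ofReal (r ^ m) := by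
          rw [mul_pow, ENNReal.ofReal_mul (by positivity), mul_assoc]

variable {m : ℕ}

lemma cap_move (m : ℕ) (x : EuclideanSpace ℝ (Fin (m+1))) (hx : x ∈ sphere (0 : EuclideanSpace ℝ (Fin (m+1))) 1) (r : ℝ) :
    MeasureTheory.Measure.hausdorffMeasure (m:ℝ)
      (sphere (0 : EuclideanSpace ℝ (Fin (m+1))) 1 ∩ ball x r)
    = MeasureTheory.Measure.hausdorffMeasure (m:ℝ)
      (sphere (0 : EuclideanSpace ℝ (Fin (m+1))) 1 ∩
        ball (EuclideanSpace.single (0 : Fin (m+1)) (1:ℝ)) r) := by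
  set e : EuclideanSpace ℝ (Fin (m+1)) := EuclideanSpace.single (0 : Fin (m+1)) (1:ℝ) with he
  have hxn : ‖x‖ = 1 := by simpa using mem_sphere_iff_norm.mp hx
  have hen : ‖e‖ = 1 := by simp [he, EuclideanSpace.norm_single]
  set L : EuclideanSpace ℝ (Fin (m+1)) ≃ₗᵢ[ℝ] EuclideanSpace ℝ (Fin (m+1)) :=
    Submodule.reflection (ℝ ∙ (x - e))ᗮ with hL
  have hLx : L x = e := Submodule.reflection_sub (by rw [hxn, hen])
  set F := L.toIsometryEquiv with hF
  have himg : F '' (sphere (0 : EuclideanSpace ℝ (Fin (m+1))) 1 ∩ ball x r)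
      = sphere (0 : EuclideanSpace ℝ (Fin (m+1))) 1 ∩ ball e r := by
    rw [Set.image_inter F.injective]
    congr 1
    · rw [F.image_sphere]
      have : F 0 = 0 := L.map_zero
      rw [this]
    · rw [F.image_ball]
      have : F x = e := hLx
      rw [this]
  rw [← himg, F.hausdorffMeasure_image]

lemma cap_small (m : ℕ) :
    ∃ C₁ : ENNReal, C₁ ≠ ⊤ ∧ ∀ r : ℝ, 0 < r → r ≤ 1/2 →
      MeasureTheory.Measure.hausdorffMeasure (m:ℝ)
        (sphere (0 : EuclideanSpace ℝ (Fin (m+1))) 1 ∩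
          ball (EuclideanSpace.single (0 : Fin (m+1)) (1:ℝ)) r)
        ≤ C₁ * ENNReal.ofReal (r ^ m) := by
  obtain ⟨B, hB, hball⟩ := euclBall_bound m
  refine ⟨((2:NNReal) : ENNReal) ^ (m:ℝ) * B, ?_, ?_⟩
  · exact ENNReal.mul_ne_top (ENNReal.rpow_ne_top_of_nonneg (by positivity) ENNReal.coe_ne_top) hB
  · intro r hr hr2
    have hlip : LipschitzOnWith 2 (chart m) (closedBall 0 r) :=
      (chart_lip m).mono (closedBall_subset_closedBall hr2)
    calc MeasureTheory.Measure.hausdorffMeasure (m:ℝ)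
          (sphere (0 : EuclideanSpace ℝ (Fin (m+1))) 1 ∩
            ball (EuclideanSpace.single (0 : Fin (m+1)) (1:ℝ)) r)
        ≤ MeasureTheory.Measure.hausdorffMeasure (m:ℝ) (chart m '' closedBall 0 r) :=
          measure_mono (cap_subset m r hr2)
      _ ≤ ((2:NNReal) : ENNReal) ^ (m:ℝ) *
            MeasureTheory.Measure.hausdorffMeasure (m:ℝ) (closedBall 0 r) :=
          hlip.hausdorffMeasure_image_le (by positivity)
      _ ≤ ((2:NNReal) : ENNReal) ^ (m:ℝ) * (B * ENNReal.ofReal (r ^ m)) := by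
          exact mul_le_mul_right (hball r hr.le) _
      _ = ((2:NNReal) : ENNReal) ^ (m:ℝ) * B * ENNReal.ofReal (r ^ m) := by rw [mul_assoc]

lemma sphere_finite (m : ℕ) :
    MeasureTheory.Measure.hausdorffMeasure (m:ℝ)
      (sphere (0 : EuclideanSpace ℝ (Fin (m+1))) 1) ≠ ⊤ := by
  obtain ⟨C₁, hC₁, hcap⟩ := cap_small m
  set S := sphere (0 : EuclideanSpace ℝ (Fin (m+1))) 1 with hS
  have hcover : S ⊆ ⋃ x ∈ S, ball x (1/2) := fun x hx =>
    Set.mem_biUnion hx (mem_ball_self (by norm_num))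
  obtain ⟨b', hb'sub, hb'fin, hcov⟩ :=
    (isCompact_sphere (0 : EuclideanSpace ℝ (Fin (m+1))) 1).elim_finite_subcover_image
      (fun x _ => isOpen_ball) hcover
  have hsub : S ⊆ ⋃ x ∈ hb'fin.toFinset, (S ∩ ball x (1/2)) := by
    intro y hy
    obtain ⟨x, hx, hyx⟩ := Set.mem_iUnion₂.mp (hcov hy)
    exact Set.mem_iUnion₂.mpr ⟨x, hb'fin.mem_toFinset.mpr hx, hy, hyx⟩
  have hle := (measure_mono (μ := MeasureTheory.Measure.hausdorffMeasure (m:ℝ)) hsub).trans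
    (measure_biUnion_finset_le _ _)
  intro htop
  rw [htop] at hle
  have hterm : ∀ x ∈ hb'fin.toFinset,
      MeasureTheory.Measure.hausdorffMeasure (m:ℝ) (S ∩ ball x (1/2)) < ⊤ := by
    intro x hx
    have hxS : x ∈ S := hb'sub (hb'fin.mem_toFinset.mp hx)
    rw [cap_move m x hxS (1/2)]
    calc MeasureTheory.Measure.hausdorffMeasure (m:ℝ)
          (S ∩ ball (EuclideanSpace.single (0 : Fin (m+1)) (1:ℝ)) (1/2))
        ≤ C₁ * ENNReal.ofReal ((1/2 : ℝ) ^ m) := hcap (1/2) (by norm_num) le_rfl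
      _ < ⊤ := ENNReal.mul_lt_top hC₁.lt_top ENNReal.ofReal_lt_top
  exact absurd hle (not_le.mpr ((ENNReal.sum_lt_top.mpr hterm).trans_le le_top))

lemma cap_bound (m : ℕ) :
    ∃ A : ENNReal, A ≠ ⊤ ∧ ∀ r : ℝ, 0 < r →
      MeasureTheory.Measure.hausdorffMeasure (m:ℝ)
        (sphere (0 : EuclideanSpace ℝ (Fin (m+1))) 1 ∩
          ball (EuclideanSpace.single (0 : Fin (m+1)) (1:ℝ)) r)
        ≤ A * ENNReal.ofReal (r ^ m) := by
  obtain ⟨C₁, hC₁, hcap⟩ := cap_small m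
  set T := MeasureTheory.Measure.hausdorffMeasure (m:ℝ)
      (sphere (0 : EuclideanSpace ℝ (Fin (m+1))) 1) with hT
  refine ⟨C₁ + T * ENNReal.ofReal ((2:ℝ)^m), ?_, ?_⟩
  · exact ENNReal.add_ne_top.mpr ⟨hC₁, ENNReal.mul_ne_top (sphere_finite m) ENNReal.ofReal_ne_top⟩
  · intro r hr
    rcases le_or_gt r (1/2) with h | h
    · calc MeasureTheory.Measure.hausdorffMeasure (m:ℝ) _ ≤ C₁ * ENNReal.ofReal (r ^ m) :=
            hcap r hr h
        _ ≤ (C₁ + T * ENNReal.ofReal ((2:ℝ)^m)) * ENNReal.ofReal (r ^ m) :=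
            mul_le_mul_left le_self_add _
    · have h1 : (1:ℝ) ≤ (2:ℝ)^m * r^m := by
        calc (1:ℝ) = (2 * (1/2))^m := by norm_num
          _ ≤ (2 * r)^m := by
              apply pow_le_pow_left₀ (by norm_num)
              linarith
          _ = 2^m * r^m := mul_pow 2 r m
      calc MeasureTheory.Measure.hausdorffMeasure (m:ℝ)
            (sphere (0 : EuclideanSpace ℝ (Fin (m+1))) 1 ∩
              ball (EuclideanSpace.single (0 : Fin (m+1)) (1:ℝ)) r)
          ≤ T := measure_mono Set.inter_subset_left
        _ = T * 1 := (mul_one T).symm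
        _ ≤ T * ENNReal.ofReal ((2:ℝ)^m * r^m) := by
            apply mul_le_mul_right
            rw [show (1 : ENNReal) = ENNReal.ofReal 1 from ENNReal.ofReal_one.symm]
            exact ENNReal.ofReal_le_ofReal h1
        _ = T * (ENNReal.ofReal ((2:ℝ)^m) * ENNReal.ofReal (r^m)) := by
            rw [ENNReal.ofReal_mul (by positivity)]
        _ ≤ (C₁ + T * ENNReal.ofReal ((2:ℝ)^m)) * ENNReal.ofReal (r ^ m) := by
            rw [← mul_assoc]
            exact mul_le_mul_left le_add_self _

lemma rterm (m k j : ℕ) :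
    ((2:ℝ)^j) ^ (-((m:ℝ)+1)) * ((2:ℝ)^(j+1) / (2:ℝ)^k)^m
      = (2:ℝ)^m * (2:ℝ) ^ (-((k:ℝ)*(m:ℝ))) * ((1:ℝ)/2)^j := by
  have h2 : (0:ℝ) < 2 := two_pos
  have e1 : ((2:ℝ)^j) ^ (-((m:ℝ)+1)) = (2:ℝ) ^ ((j:ℝ) * (-((m:ℝ)+1))) := by
    rw [← Real.rpow_natCast (2:ℝ) j, ← Real.rpow_mul h2.le]
  have e2 : ((2:ℝ)^(j+1) / (2:ℝ)^k)^m = (2:ℝ) ^ ((((j:ℝ)+1) - (k:ℝ)) * (m:ℝ)) := by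
    rw [← Real.rpow_natCast (2:ℝ) (j+1), ← Real.rpow_natCast (2:ℝ) k, ← Real.rpow_sub h2,
      ← Real.rpow_natCast ((2:ℝ) ^ (((j+1:ℕ):ℝ) - (k:ℝ))) m, ← Real.rpow_mul h2.le]
    push_cast
    ring_nf
  have e3 : ((1:ℝ)/2)^j = (2:ℝ) ^ (-(j:ℝ)) := by
    rw [Real.rpow_neg h2.le, Real.rpow_natCast, one_div, inv_pow]
  have e4 : (2:ℝ)^m = (2:ℝ) ^ ((m:ℝ)) := by rw [Real.rpow_natCast]
  rw [e1, e2, e3, e4, ← Real.rpow_add h2, ← Real.rpow_add h2, ← Real.rpow_add h2]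
  congr 1
  ring

end Aux

/-- The dyadic kernel estimate on the sphere:
`∫_{S^{d-1}} (1 + 2^k |e₁ - y|)^{-d} dσ(y) ≤ C 2^{-k(d-1)}`. -/
theorem stmt18 (d : ℕ) (hd : 2 ≤ d) :
    ∃ C > (0 : ℝ), ∀ k : ℕ,
      ∫ y, (1 + (2 : ℝ) ^ k * ‖EuclideanSpace.single (⟨0, by omega⟩ : Fin d) (1 : ℝ) - y‖) ^
          (-(d : ℝ)) ∂(sphereMeasure d) ≤
        C * (2 : ℝ) ^ (-((k : ℝ) * (d - 1))) := by
  obtain ⟨m, rfl⟩ : ∃ m, d = m + 1 := ⟨d - 1, by omega⟩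
  obtain ⟨A, hA, hcap⟩ := cap_bound m
  have hXne : A * ENNReal.ofReal ((2:ℝ)^m) * 2 ≠ ⊤ :=
    ENNReal.mul_ne_top (ENNReal.mul_ne_top hA ENNReal.ofReal_ne_top) (by norm_num)
  refine ⟨(A * ENNReal.ofReal ((2:ℝ)^m) * 2).toReal + 1, by positivity, ?_⟩
  intro k
  set e : EuclideanSpace ℝ (Fin (m+1)) := EuclideanSpace.single (0 : Fin (m+1)) (1:ℝ) with he
  set S : Set (EuclideanSpace ℝ (Fin (m+1))) := sphere 0 1 with hS
  set σ : Measure (EuclideanSpace ℝ (Fin (m+1))) := sphereMeasure (m+1) with hσ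
  have hσdef : σ = (MeasureTheory.Measure.hausdorffMeasure ((m:ℕ):ℝ)).restrict S := rfl
  set b : EuclideanSpace ℝ (Fin (m+1)) → ℝ := fun y => 1 + (2:ℝ)^k * ‖e - y‖ with hbdef
  have hb1 : ∀ y, 1 ≤ b y := fun y => le_add_of_nonneg_right (by positivity)
  have hb0 : ∀ y, 0 < b y := fun y => lt_of_lt_of_le one_pos (hb1 y)
  have hbc : Continuous b :=
    continuous_const.add (continuous_const.mul ((continuous_const.sub continuous_id).norm))
  have hDpos : (0:ℝ) < ((m+1:ℕ):ℝ) := by positivity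
  have hfc : Continuous fun y => b y ^ (-((m+1:ℕ):ℝ)) := hbc.rpow_const fun y => Or.inl (hb0 y).ne'
  show (∫ y, b y ^ (-((m+1:ℕ):ℝ)) ∂σ) ≤ ((A * ENNReal.ofReal ((2:ℝ)^m) * 2).toReal + 1) *
      (2:ℝ) ^ (-((k:ℝ) * (((m+1:ℕ):ℝ) - 1)))
  have hgoal_eq : (∫ y, b y ^ (-((m+1:ℕ):ℝ)) ∂σ) = (∫⁻ y, ENNReal.ofReal (b y ^ (-((m+1:ℕ):ℝ))) ∂σ).toReal :=
    integral_eq_lintegral_of_nonneg_ae (Filter.Eventually.of_forall fun y =>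
      Real.rpow_nonneg (hb0 y).le _) hfc.aestronglyMeasurable
  set Aset : ℕ → Set (EuclideanSpace ℝ (Fin (m+1))) :=
    fun j => {y | (2:ℝ)^j ≤ b y ∧ b y < 2^(j+1)} with hAset
  have hmeas : ∀ j, MeasurableSet (Aset j) := fun j =>
    (measurableSet_le measurable_const hbc.measurable).inter
      (measurableSet_lt hbc.measurable measurable_const)
  have hunion : (⋃ j, Aset j) = univ := by
    ext y
    simp only [mem_iUnion, mem_univ, iff_true]
    have h1 := hb1 y
    have hex : ∃ n : ℕ, b y < 2^(n+1) := by
      obtain ⟨n, hn⟩ := pow_unbounded_of_one_lt (b y) (by norm_num : (1:ℝ) < 2)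
      exact ⟨n, hn.trans_le (pow_le_pow_right₀ (by norm_num) (Nat.le_succ n))⟩
    refine ⟨Nat.find hex, ?_, Nat.find_spec hex⟩
    rcases Nat.eq_zero_or_pos (Nat.find hex) with h0 | hpos
    · rw [h0]; simpa using h1
    · have hmin := Nat.find_min hex (Nat.sub_lt hpos one_pos)
      push_neg at hmin
      have heq : Nat.find hex - 1 + 1 = Nat.find hex := by omega
      rwa [heq] at hmin
  have hdisj0 : ∀ i j : ℕ, i < j → Disjoint (Aset i) (Aset j) := by
    intro i j h
    refine Set.disjoint_left.mpr fun y hyi hyj => ?_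
    have h2 : (2:ℝ)^(i+1) ≤ 2^j := pow_le_pow_right₀ (by norm_num) h
    have h3 := hyi.2
    have h4 := hyj.1
    linarith
  have hdisj : Pairwise (Function.onFun Disjoint Aset) := by
    intro i j hij
    rcases hij.lt_or_gt with h | h
    · exact hdisj0 i j h
    · exact (hdisj0 j i h).symm
  have hsplit : (∫⁻ y, ENNReal.ofReal (b y ^ (-((m+1:ℕ):ℝ))) ∂σ)
      = ∑' j, ∫⁻ y in Aset j, ENNReal.ofReal (b y ^ (-((m+1:ℕ):ℝ))) ∂σ := by
    rw [← setLIntegral_univ, ← hunion, lintegral_iUnion hmeas hdisj]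
  set X : ENNReal := A * ENNReal.ofReal ((2:ℝ)^m) * ENNReal.ofReal ((2:ℝ) ^ (-((k:ℝ)*(m:ℝ))))
    with hX
  have hterm : ∀ j, (∫⁻ y in Aset j, ENNReal.ofReal (b y ^ (-((m+1:ℕ):ℝ))) ∂σ)
      ≤ X * ENNReal.ofReal (((1:ℝ)/2)^j) := by
    intro j
    have hstep1 : (∫⁻ y in Aset j, ENNReal.ofReal (b y ^ (-((m+1:ℕ):ℝ))) ∂σ)
        ≤ ENNReal.ofReal (((2:ℝ)^j) ^ (-((m+1:ℕ):ℝ))) * σ (Aset j) := by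
      rw [← setLIntegral_const]
      refine setLIntegral_mono measurable_const fun y hy => ?_
      have hy1 : (2:ℝ)^j ≤ b y := hy.1
      exact ENNReal.ofReal_le_ofReal
        (Real.rpow_le_rpow_of_nonpos (by positivity) hy1 (neg_nonpos.mpr hDpos.le))
    have hstep2 : σ (Aset j) ≤ A * ENNReal.ofReal (((2:ℝ)^(j+1)/(2:ℝ)^k) ^ m) := by
      have hsub : Aset j ∩ S ⊆ S ∩ ball e ((2:ℝ)^(j+1)/(2:ℝ)^k) := by
        rintro y ⟨hyA, hyS⟩
        refine ⟨hyS, ?_⟩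
        rw [mem_ball, dist_eq_norm, ← norm_neg (y - e), neg_sub]
        have hk : (0:ℝ) < 2^k := by positivity
        rw [lt_div_iff₀ hk]
        have h2 := hyA.2
        simp only [hAset, mem_setOf_eq, hbdef] at h2
        nlinarith [norm_nonneg (e - y)]
      calc σ (Aset j)
          = MeasureTheory.Measure.hausdorffMeasure ((m:ℕ):ℝ) (Aset j ∩ S) := by
            rw [hσdef, MeasureTheory.Measure.restrict_apply (hmeas j)]
        _ ≤ MeasureTheory.Measure.hausdorffMeasure ((m:ℕ):ℝ)
              (S ∩ ball e ((2:ℝ)^(j+1)/(2:ℝ)^k)) := measure_mono hsub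
        _ ≤ A * ENNReal.ofReal (((2:ℝ)^(j+1)/(2:ℝ)^k) ^ m) := hcap _ (by positivity)
    calc (∫⁻ y in Aset j, ENNReal.ofReal (b y ^ (-((m+1:ℕ):ℝ))) ∂σ)
        ≤ ENNReal.ofReal (((2:ℝ)^j) ^ (-((m+1:ℕ):ℝ))) *
            (A * ENNReal.ofReal (((2:ℝ)^(j+1)/(2:ℝ)^k) ^ m)) :=
          hstep1.trans (mul_le_mul_right hstep2 _)
      _ = A * ENNReal.ofReal ((((2:ℝ)^j) ^ (-((m+1:ℕ):ℝ))) * (((2:ℝ)^(j+1)/(2:ℝ)^k) ^ m)) := by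
          rw [ENNReal.ofReal_mul (by positivity)]
          ring
      _ = A * ENNReal.ofReal ((2:ℝ)^m * (2:ℝ) ^ (-((k:ℝ)*(m:ℝ))) * ((1:ℝ)/2)^j) := by
          rw [show (-((m+1:ℕ):ℝ)) = -((m:ℝ)+1) by push_cast; ring, rterm m k j]
      _ = X * ENNReal.ofReal (((1:ℝ)/2)^j) := by
          rw [ENNReal.ofReal_mul (by positivity), ENNReal.ofReal_mul (by positivity), hX]
          ring
  have hgeom : (∑' j : ℕ, ENNReal.ofReal (((1:ℝ)/2)^j)) = 2 := by
    have h12 : ∀ j : ℕ, ENNReal.ofReal (((1:ℝ)/2)^j) = (2⁻¹ : ENNReal)^j := by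
      intro j
      rw [ENNReal.ofReal_pow (by norm_num)]
      congr 1
      rw [show (1:ℝ)/2 = (2:ℝ)⁻¹ by norm_num, ENNReal.ofReal_inv_of_pos two_pos]
      norm_num
    simp_rw [h12]
    rw [ENNReal.tsum_geometric, ENNReal.one_sub_inv_two, inv_inv]
  have hfinal : (∫⁻ y, ENNReal.ofReal (b y ^ (-((m+1:ℕ):ℝ))) ∂σ)
      ≤ A * ENNReal.ofReal ((2:ℝ)^m) * 2 * ENNReal.ofReal ((2:ℝ) ^ (-((k:ℝ)*(m:ℝ)))) := by
    rw [hsplit]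
    calc (∑' j, ∫⁻ y in Aset j, ENNReal.ofReal (b y ^ (-((m+1:ℕ):ℝ))) ∂σ)
        ≤ ∑' j : ℕ, X * ENNReal.ofReal (((1:ℝ)/2)^j) := ENNReal.tsum_le_tsum hterm
      _ = X * ∑' j : ℕ, ENNReal.ofReal (((1:ℝ)/2)^j) := ENNReal.tsum_mul_left
      _ = X * 2 := by rw [hgeom]
      _ = A * ENNReal.ofReal ((2:ℝ)^m) * 2 * ENNReal.ofReal ((2:ℝ) ^ (-((k:ℝ)*(m:ℝ)))) := by
          rw [hX]; ring
  have hRne : A * ENNReal.ofReal ((2:ℝ)^m) * 2 * ENNReal.ofReal ((2:ℝ) ^ (-((k:ℝ)*(m:ℝ)))) ≠ ⊤ :=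
    ENNReal.mul_ne_top hXne ENNReal.ofReal_ne_top
  have h5 := ENNReal.toReal_mono hRne hfinal
  rw [ENNReal.toReal_mul, ENNReal.toReal_ofReal (by positivity :
    (0:ℝ) ≤ (2:ℝ) ^ (-((k:ℝ)*(m:ℝ))))] at h5
  have hexp : (-((k:ℝ) * (((m+1:ℕ):ℝ) - 1))) = -((k:ℝ)*(m:ℝ)) := by
    push_cast; ring
  rw [hgoal_eq, hexp]
  calc (∫⁻ y, ENNReal.ofReal (b y ^ (-((m+1:ℕ):ℝ))) ∂σ).toReal
      ≤ (A * ENNReal.ofReal ((2:ℝ)^m) * 2).toReal * (2:ℝ) ^ (-((k:ℝ)*(m:ℝ))) := h5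
    _ ≤ ((A * ENNReal.ofReal ((2:ℝ)^m) * 2).toReal + 1) * (2:ℝ) ^ (-((k:ℝ)*(m:ℝ))) := by
        have : (0:ℝ) ≤ (2:ℝ) ^ (-((k:ℝ)*(m:ℝ))) := by positivity
        nlinarith
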